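/- Define f*_{n,k}(q) = q^(k(k-1)/2) * qbinom(n-1,k-1) * ([n]_q)^(n-k) for n >= 1 (and f*_{0,k} = delta_{k0}), where [n]_q = 1+q+...+q^(n-1) and qbinom denotes the Gaussian binomial coefficient. Then sum_{k=0}^n f*_{n,k}(q) x^k = x * prod_{i=1}^{n-1} (q^i x + [n]_q) in Z[q,x], for all n >= 1. -/
import Mathlib


open MvPolynomial

/-- The `q`-integer `[n]_q = 1 + q + ⋯ + q^{n-1}`. -/
def qInt {R : Type*} [CommRing R] (q : R) (n : ℕ) : R :=
  ∑ i ∈ Finset.range n, q ^ i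

/-- The Gaussian binomial coefficient `qbinom(n,k)`, defined by the `q`-Pascal
recurrence `qbinom(n+1,k+1) = qbinom(n,k) + q^{k+1}·qbinom(n,k+1)` with
`qbinom(n,0) = 1` and `qbinom(0,k+1) = 0`. -/
def qChoose {R : Type*} [CommRing R] (q : R) : ℕ → ℕ → R
  | _, 0 => 1
  | 0, _ + 1 => 0
  | n + 1, k + 1 => qChoose q n k + q ^ (k + 1) * qChoose q n (k + 1)

lemma qChoose_eq_zero {R : Type*} [CommRing R] (q : R) :
    ∀ n k : ℕ, n < k → qChoose q n k = 0
  | 0, 0, h => absurd h (lt_irrefl 0)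
  | 0, _ + 1, _ => rfl
  | n + 1, 0, h => absurd h (by omega)
  | n + 1, k + 1, h => by
      rw [qChoose, qChoose_eq_zero q n k (by omega), qChoose_eq_zero q n (k + 1) (by omega)]
      ring

lemma tri_succ (j : ℕ) : (j + 1) * (j + 1 + 1) / 2 = j * (j + 1) / 2 + (j + 1) := by
  have h : (j + 1) * (j + 1 + 1) = j * (j + 1) + (j + 1) * 2 := by ring
  rw [h, Nat.add_mul_div_right _ _ (by norm_num)]

lemma key {R : Type*} [CommRing R] (q a : R) :
    ∀ (m : ℕ) (x : R),
      ∑ j ∈ Finset.range (m + 1), q ^ (j * (j + 1) / 2) * qChoose q m j * x ^ j * a ^ (m - j)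
        = ∏ j ∈ Finset.range m, (q ^ (j + 1) * x + a) := by
  intro m
  induction m with
  | zero => intro x; simp [qChoose]
  | succ m ih =>
    intro x
    rw [Finset.prod_range_succ']
    have h1 : ∀ j ∈ Finset.range m, (q ^ (j + 1 + 1) * x + a) = (q ^ (j + 1) * (q * x) + a) := by
      intro j _; ring
    rw [Finset.prod_congr rfl h1, ← ih (q * x)]
    have hext : (∑ j ∈ Finset.range (m + 2),
          q ^ (j * (j + 1) / 2) * qChoose q m j * (q * x) ^ j * a ^ (m - j))
        = ∑ j ∈ Finset.range (m + 1),
            q ^ (j * (j + 1) / 2) * qChoose q m j * (q * x) ^ j * a ^ (m - j) := by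
      rw [Finset.sum_range_succ, qChoose_eq_zero q m (m + 1) (by omega)]; ring
    rw [← hext]
    have hsplit : (∑ j ∈ Finset.range (m + 2),
          q ^ (j * (j + 1) / 2) * qChoose q m j * (q * x) ^ j * a ^ (m - j)) * (q ^ (0 + 1) * x + a)
        = (∑ j ∈ Finset.range (m + 2),
            q ^ (j * (j + 1) / 2) * qChoose q m j * (q * x) ^ j * a ^ (m - j) * (q * x))
          + ∑ j ∈ Finset.range (m + 2),
            q ^ (j * (j + 1) / 2) * qChoose q m j * (q * x) ^ j * a ^ (m - j) * a := by
      rw [← Finset.sum_mul, ← Finset.sum_mul, ← mul_add]; ring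
    rw [hsplit]
    rw [Finset.sum_range_succ (f := fun j =>
      q ^ (j * (j + 1) / 2) * qChoose q m j * (q * x) ^ j * a ^ (m - j) * (q * x)),
      qChoose_eq_zero q m (m + 1) (by omega)]
    rw [Finset.sum_range_succ' (f := fun j =>
      q ^ (j * (j + 1) / 2) * qChoose q m j * (q * x) ^ j * a ^ (m - j) * a)]
    rw [Finset.sum_range_succ' (f := fun j =>
      q ^ (j * (j + 1) / 2) * qChoose q (m + 1) j * x ^ j * a ^ (m + 1 - j))]
    have hterm : ∀ j ∈ Finset.range (m + 1),
        q ^ ((j + 1) * (j + 1 + 1) / 2) * qChoose q (m + 1) (j + 1) * x ^ (j + 1)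
            * a ^ (m + 1 - (j + 1))
          = q ^ (j * (j + 1) / 2) * qChoose q m j * (q * x) ^ j * a ^ (m - j) * (q * x)
            + q ^ ((j + 1) * (j + 1 + 1) / 2) * qChoose q m (j + 1) * (q * x) ^ (j + 1)
              * a ^ (m - (j + 1)) * a := by
      intro j hj
      have hj' : j ≤ m := by
        have := Finset.mem_range.mp hj; omega
      have hsub : m + 1 - (j + 1) = m - j := by omega
      rw [hsub, qChoose, tri_succ]
      rcases eq_or_lt_of_le hj' with hje | hjl
      · subst hje
        rw [qChoose_eq_zero q j (j + 1) (by omega)]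
        ring
      · have hsub2 : m - j = m - (j + 1) + 1 := by omega
        rw [hsub2]
        ring
    rw [Finset.sum_congr rfl hterm, Finset.sum_add_distrib]
    simp only [qChoose, Nat.sub_zero, pow_zero]
    ring

/-- The modified `q`-forest numbers
`f*_{n,k}(q) = q^{k(k-1)/2} qbinom(n-1,k-1) ([n]_q)^{n-k}` for `n ≥ 1`, `k ≥ 1`,
with `f*_{n,0} = 0` for `n ≥ 1` (the lower index `k-1 = -1` of the Gaussian
binomial being out of range). -/
def qForest {R : Type*} [CommRing R] (q : R) (n k : ℕ) : R :=
  if k = 0 then 0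
  else q ^ (k * (k - 1) / 2) * qChoose q (n - 1) (k - 1) * (qInt q n) ^ (n - k)

/-- The `q`-Abel evaluation of the modified `q`-forest numbers: in `ℤ[q,x]`
(with `q = X 0`, `x = X 1`), for all `n ≥ 1`,
`∑_{k=0}^n f*_{n,k}(q) x^k = x ∏_{i=1}^{n-1} (q^i x + [n]_q)`. -/
theorem qforest_rowgen (n : ℕ) (hn : 1 ≤ n) :
    ∑ k ∈ Finset.range (n + 1),
        qForest (X 0 : MvPolynomial (Fin 2) ℤ) n k * (X 1) ^ k
      = (X 1 : MvPolynomial (Fin 2) ℤ)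
          * ∏ i ∈ Finset.Icc 1 (n - 1), ((X 0) ^ i * (X 1) + qInt (X 0) n) := by
  obtain ⟨m, rfl⟩ : ∃ m, n = m + 1 := ⟨n - 1, by omega⟩
  set q : MvPolynomial (Fin 2) ℤ := X 0 with hq
  set x : MvPolynomial (Fin 2) ℤ := X 1 with hx
  set a : MvPolynomial (Fin 2) ℤ := qInt q (m + 1) with ha
  have hprod : ∏ i ∈ Finset.Icc 1 (m + 1 - 1), (q ^ i * x + a)
      = ∏ j ∈ Finset.range m, (q ^ (j + 1) * x + a) := by
    have : Finset.Icc 1 (m + 1 - 1) = Finset.Ico 1 (m + 1) := by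
      rw [Finset.Ico_add_one_right_eq_Icc, Nat.add_sub_cancel]
    rw [this, Finset.prod_Ico_eq_prod_range]
    apply Finset.prod_congr (by congr 1)
    intro j _
    rw [add_comm 1 j]
  rw [hprod, ← key q a m x, Finset.mul_sum, Finset.sum_range_succ']
  have h0 : qForest q (m + 1) 0 * x ^ 0 = 0 := by simp [qForest]
  rw [h0, add_zero]
  apply Finset.sum_congr rfl
  intro k _
  have : qForest q (m + 1) (k + 1)
      = q ^ (k * (k + 1) / 2) * qChoose q m k * a ^ (m - k) := by
    rw [qForest]
    simp only [Nat.add_sub_cancel, Nat.succ_sub_succ, Nat.sub_zero,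
      if_neg (Nat.succ_ne_zero k)]
    rw [mul_comm (k + 1) k]
  rw [this]
  ring
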